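/- Let a, b ∈ ℝ with a < b < 0. Then sup_{t ≥ 0} |e^{a t} − e^{b t}| = (a/b)^{b/(b−a)} − (a/b)^{a/(b−a)}, where the powers are real powers of the positive base a/b > 1. -/

import Mathlib

open Real

/-- For `a < b < 0`, the supremum of `|e^{at} - e^{bt}|` over `t ≥ 0` equals
`(a/b)^{b/(b-a)} - (a/b)^{a/(b-a)}`. -/
theorem sup_abs_exp_diff (a b : ℝ) (hab : a < b) (hb : b < 0) :
    sSup ((fun t : ℝ => |Real.exp (a * t) - Real.exp (b * t)|) '' Set.Ici 0) =
      (a / b) ^ (b / (b - a)) - (a / b) ^ (a / (b - a)) := by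
  have ha : a < 0 := hab.trans hb
  have hba : (0:ℝ) < b - a := sub_pos.mpr hab
  have hc0 : (0:ℝ) < a / b := div_pos_of_neg_of_neg ha hb
  have hc : 1 < a / b := by
    rw [lt_div_iff_of_neg hb]; linarith
  set c : ℝ := a / b with hcdef
  set T : ℝ := Real.log c / (b - a) with hTdef
  have hlogc : 0 < Real.log c := Real.log_pos hc
  have hT0 : 0 < T := div_pos hlogc hba
  have hbT : Real.exp (b * T) = c ^ (b / (b - a)) := by
    rw [Real.rpow_def_of_pos hc0]
    congr 1
    rw [hTdef]; field_simp
  have haT : Real.exp (a * T) = c ^ (a / (b - a)) := by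
    rw [Real.rpow_def_of_pos hc0]
    congr 1
    rw [hTdef]; field_simp
  set g : ℝ → ℝ := fun t => Real.exp (b * t) - Real.exp (a * t) with hgdef
  -- derivative of g
  have hderiv : ∀ t : ℝ, HasDerivAt g (b * Real.exp (b * t) - a * Real.exp (a * t)) t := by
    intro t
    have h1 : HasDerivAt (fun t : ℝ => Real.exp (b * t)) (Real.exp (b * t) * (b * 1)) t :=
      ((hasDerivAt_id t).const_mul b).exp
    have h2 : HasDerivAt (fun t : ℝ => Real.exp (a * t)) (Real.exp (a * t) * (a * 1)) t :=
      ((hasDerivAt_id t).const_mul a).exp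
    have := h1.sub h2
    exact this.congr_deriv (by ring)
  have hcont : Continuous g := by
    fun_prop
  -- sign of derivative
  have hsign_pos : ∀ t : ℝ, t < T → 0 < b * Real.exp (b * t) - a * Real.exp (a * t) := by
    intro t ht
    have hu : Real.exp ((b - a) * t) < c := by
      have : (b - a) * t < Real.log c := by
        rw [hTdef] at ht
        calc (b - a) * t < (b - a) * T := by
              exact (mul_lt_mul_iff_right₀ hba).mpr ht
          _ = Real.log c := by rw [hTdef]; field_simp
      calc Real.exp ((b - a) * t) < Real.exp (Real.log c) := Real.exp_lt_exp.mpr this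
        _ = c := Real.exp_log hc0
    have hE : 0 < Real.exp (a * t) := Real.exp_pos _
    have hsplit : Real.exp (b * t) = Real.exp (a * t) * Real.exp ((b - a) * t) := by
      rw [← Real.exp_add]; ring_nf
    rw [hsplit]
    have hbu : a < b * Real.exp ((b - a) * t) := by
      have := (mul_lt_mul_left_of_neg hb).mpr hu
      calc a = b * c := by rw [hcdef]; field_simp [hb.ne]
        _ < b * Real.exp ((b - a) * t) := this
    nlinarith
  have hsign_neg : ∀ t : ℝ, T < t → b * Real.exp (b * t) - a * Real.exp (a * t) < 0 := by
    intro t ht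
    have hu : c < Real.exp ((b - a) * t) := by
      have : Real.log c < (b - a) * t := by
        calc Real.log c = (b - a) * T := by rw [hTdef]; field_simp
          _ < (b - a) * t := (mul_lt_mul_iff_right₀ hba).mpr ht
      calc c = Real.exp (Real.log c) := (Real.exp_log hc0).symm
        _ < Real.exp ((b - a) * t) := Real.exp_lt_exp.mpr this
    have hE : 0 < Real.exp (a * t) := Real.exp_pos _
    have hsplit : Real.exp (b * t) = Real.exp (a * t) * Real.exp ((b - a) * t) := by
      rw [← Real.exp_add]; ring_nf
    rw [hsplit]
    have hbu : b * Real.exp ((b - a) * t) < a := by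
      have := (mul_lt_mul_left_of_neg hb).mpr hu
      calc b * Real.exp ((b - a) * t) < b * c := this
        _ = a := by rw [hcdef]; field_simp [hb.ne]
    nlinarith
  -- monotonicity
  have hmono : StrictMonoOn g (Set.Icc 0 T) := by
    apply strictMonoOn_of_deriv_pos (convex_Icc 0 T) hcont.continuousOn
    intro t ht
    rw [interior_Icc] at ht
    rw [(hderiv t).deriv]
    exact hsign_pos t ht.2
  have hanti : StrictAntiOn g (Set.Ici T) := by
    apply strictAntiOn_of_deriv_neg (convex_Ici T) hcont.continuousOn
    intro t ht
    rw [interior_Ici] at ht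
    rw [(hderiv t).deriv]
    exact hsign_neg t ht
  have hle : ∀ t : ℝ, 0 ≤ t → g t ≤ g T := by
    intro t ht
    rcases le_total t T with h | h
    · exact hmono.monotoneOn (Set.mem_Icc.mpr ⟨ht, h⟩) (Set.mem_Icc.mpr ⟨hT0.le, le_refl _⟩) h
    · exact hanti.antitoneOn (Set.mem_Ici.mpr (le_refl _)) (Set.mem_Ici.mpr h) h
  have habs : ∀ t : ℝ, 0 ≤ t → |Real.exp (a * t) - Real.exp (b * t)| = g t := by
    intro t ht
    rw [abs_sub_comm, abs_of_nonneg]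
    exact sub_nonneg.mpr (Real.exp_le_exp.mpr (mul_le_mul_of_nonneg_right hab.le ht))
  have hgreat : IsGreatest ((fun t : ℝ => |Real.exp (a * t) - Real.exp (b * t)|) '' Set.Ici 0) (g T) := by
    constructor
    · exact ⟨T, Set.mem_Ici.mpr hT0.le, habs T hT0.le⟩
    · rintro y ⟨t, ht, rfl⟩
      show |Real.exp (a * t) - Real.exp (b * t)| ≤ g T
      rw [habs t ht]
      exact hle t ht
  rw [hgreat.csSup_eq]
  show Real.exp (b * T) - Real.exp (a * T) = _
  rw [hbT, haT]
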